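/- arXiv:2009.05814 — 4 statements merged into one kernel-verified Lean document; each statement's English description precedes it below -/
import Mathlib

section
/- Let $S \geq 2$, $A \in \mathbb{R}^{m\times n}$, $W$ symmetric positive semidefinite with square root $W^{1/2}$, $f \in \mathbb{R}^m$, $\mu > 0$, and define $G(u_1,\dots,u_S) = \sum_{s=1}^S \|W^{1/2}Au_s - W^{1/2}f\|^2 + \mu^2 \sum_{1 \le s < t \le S} \|u_s - u_t\|^2$. Then: (i) if $u^*$ minimizes $g(u)=\|W^{1/2}Au - W^{1/2}f\|^2$ then $(u^*,\dots,u^*)$ minimizes $G$; (ii) any minimizer $(u_1^*,\dots,u_S^*)$ of $G$ satisfies $u_1^* = \cdots = u_S^*$, and $u_1^*$ minimizes $g$. -/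
open Matrix

theorem split_pwls_S_blocks (S m n : ℕ) (hS : 2 ≤ S)
    (A : Matrix (Fin m) (Fin n) ℝ) (W B : Matrix (Fin m) (Fin m) ℝ)
    (hW : Bᵀ * B = W) (f : Fin m → ℝ) (μ : ℝ) (hμ : 0 < μ) :
    let g : (Fin n → ℝ) → ℝ := fun u =>
      ∑ i, (B.mulVec (A.mulVec u) i - B.mulVec f i) ^ 2
    let G : (Fin S → Fin n → ℝ) → ℝ := fun u =>
      (∑ s, g (u s)) +
        μ ^ 2 * ∑ s, ∑ t, if s < t then ∑ j, (u s j - u t j) ^ 2 else 0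
    (∀ u' : Fin n → ℝ, (∀ u, g u' ≤ g u) →
        ∀ u : Fin S → Fin n → ℝ, G (fun _ => u') ≤ G u) ∧
    (∀ u' : Fin S → Fin n → ℝ, (∀ u, G u' ≤ G u) →
        (∀ s t : Fin S, u' s = u' t) ∧ ∀ u, g (u' ⟨0, by omega⟩) ≤ g u) := by
  intro g G
  have hSpos : (0:ℝ) < (S:ℝ) := by
    have : 0 < S := by omega
    exact_mod_cast this
  have hpen : ∀ u : Fin S → Fin n → ℝ,
      0 ≤ ∑ s, ∑ t, if s < t then ∑ j, (u s j - u t j) ^ 2 else 0 := by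
    intro u
    refine Finset.sum_nonneg fun s _ => Finset.sum_nonneg fun t _ => ?_
    split
    · exact Finset.sum_nonneg fun j _ => sq_nonneg _
    · exact le_rfl
  have hGconst : ∀ v, G (fun _ => v) = S * g v := by
    intro v
    simp [G, sub_self, Finset.sum_const, Finset.card_univ, nsmul_eq_mul]
  constructor
  · intro u' hmin u
    have h1 : G (fun _ => u') = ∑ _s : Fin S, g u' := by
      rw [hGconst]; simp [Finset.sum_const, Finset.card_univ, nsmul_eq_mul]
    rw [h1]
    have h2 : ∑ _s : Fin S, g u' ≤ ∑ s, g (u s) :=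
      Finset.sum_le_sum fun s _ => hmin (u s)
    have h3 : ∑ s, g (u s) ≤ G u := by
      have := hpen u
      have : 0 ≤ μ ^ 2 * ∑ s, ∑ t, if s < t then ∑ j, (u s j - u t j) ^ 2 else 0 :=
        mul_nonneg (sq_nonneg _) this
      simp only [G]; linarith
    exact h2.trans h3
  · intro u' hmin
    -- penalty of u' is zero
    have key : ∀ s₀ : Fin S, G u' ≤ S * g (u' s₀) := by
      intro s₀
      have := hmin (fun _ => u' s₀)
      rwa [hGconst] at this
    have hsum : (S:ℝ) * G u' ≤ (S:ℝ) * ∑ s, g (u' s) := by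
      calc (S:ℝ) * G u' = ∑ _s : Fin S, G u' := by
            simp [Finset.sum_const, Finset.card_univ, nsmul_eq_mul]
        _ ≤ ∑ s, S * g (u' s) := Finset.sum_le_sum fun s _ => key s
        _ = (S:ℝ) * ∑ s, g (u' s) := by rw [Finset.mul_sum]
    have hGle : G u' ≤ ∑ s, g (u' s) := le_of_mul_le_mul_left hsum hSpos
    have hP0 : (∑ s, ∑ t, if s < t then ∑ j, (u' s j - u' t j) ^ 2 else 0) = 0 := by
      have h1 : μ ^ 2 * (∑ s, ∑ t, if s < t then ∑ j, (u' s j - u' t j) ^ 2 else 0) ≤ 0 := by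
        simp only [G] at hGle; linarith
      have h2 := hpen u'
      have hμ2 : 0 < μ ^ 2 := by positivity
      nlinarith
    -- each pair term is zero
    have hpair : ∀ s t : Fin S, s < t → ∑ j, (u' s j - u' t j) ^ 2 = 0 := by
      intro s t hst
      have hterm : ∀ a ∈ (Finset.univ : Finset (Fin S)),
          (0:ℝ) ≤ ∑ b, if a < b then ∑ j, (u' a j - u' b j) ^ 2 else 0 :=
        fun a _ => Finset.sum_nonneg fun b _ => by
          split
          · exact Finset.sum_nonneg fun j _ => sq_nonneg _
          · exact le_rfl
      have houter := (Finset.sum_eq_zero_iff_of_nonneg hterm).mp hP0 s (Finset.mem_univ s)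
      have hinner : ∀ b ∈ (Finset.univ : Finset (Fin S)),
          (0:ℝ) ≤ if s < b then ∑ j, (u' s j - u' b j) ^ 2 else 0 :=
        fun b _ => by
          split
          · exact Finset.sum_nonneg fun j _ => sq_nonneg _
          · exact le_rfl
      have := (Finset.sum_eq_zero_iff_of_nonneg hinner).mp houter t (Finset.mem_univ t)
      simpa [hst] using this
    have heq : ∀ s t : Fin S, s < t → u' s = u' t := by
      intro s t hst
      funext j
      have h0 := hpair s t hst
      have := (Finset.sum_eq_zero_iff_of_nonneg
        (fun j _ => sq_nonneg (u' s j - u' t j))).mp h0 j (Finset.mem_univ j)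
      have := pow_eq_zero_iff (n := 2) (by norm_num) |>.mp this
      linarith [sub_eq_zero.mp this]
    have hall : ∀ s t : Fin S, u' s = u' t := by
      intro s t
      rcases lt_trichotomy s t with h | h | h
      · exact heq s t h
      · rw [h]
      · exact (heq t s h).symm
    refine ⟨hall, fun u => ?_⟩
    have h0 : G u' = S * g (u' ⟨0, by omega⟩) := by
      have hconst : u' = fun _ => u' ⟨0, by omega⟩ := by
        funext s; exact hall s ⟨0, by omega⟩
      rw [hconst] at *
      exact hGconst _
    have := hmin (fun _ => u)
    rw [hGconst] at this
    rw [h0] at this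
    exact le_of_mul_le_mul_left this hSpos
end

section
/- For the univariate Potts problem: let $g \in \mathbb{R}^n$, $\gamma > 0$, and let $u^*$ be any minimizer of $P(u) = \|u - g\|^2 + \gamma\,J(u)$ over $u \in \mathbb{R}^n$, where $J(u) = \#\{i \in \{1,\dots,n-1\} : u_i \neq u_{i+1}\}$. Then the jump set of $u^*$ is contained in the jump set of $g$, i.e., $u^*_i \neq u^*_{i+1}$ implies $g_i \neq g_{i+1}$. -/
/-- Number of jumps of a discrete signal of length `n+1`. -/
noncomputable def jumpCount (n : ℕ) (u : Fin (n + 1) → ℝ) : ℕ :=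
  (Finset.univ.filter fun i : Fin n => u i.castSucc ≠ u i.succ).card

noncomputable def rseg (n : ℕ) (w : Fin (n + 1) → ℝ) (p : Fin (n + 1)) : Finset (Fin (n + 1)) :=
  Finset.univ.filter fun j => p ≤ j ∧
    ∀ k : Fin n, p ≤ k.castSucc → k.succ ≤ j → w k.castSucc = w k.succ

lemma self_mem_rseg (n : ℕ) (w : Fin (n + 1) → ℝ) (p : Fin (n + 1)) : p ∈ rseg n w p := by
  simp only [rseg, Finset.mem_filter, Finset.mem_univ, true_and]
  refine ⟨le_refl _, fun k h1 h2 => ?_⟩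
  exfalso
  simp only [Fin.le_def, Fin.coe_castSucc, Fin.val_succ] at h1 h2
  omega

lemma rseg_perturb (n : ℕ) (w : Fin (n + 1) → ℝ) (p : Fin (n + 1))
    (hp : ∀ k : Fin n, k.succ = p → w k.castSucc ≠ w k.succ) (t : ℝ) :
    jumpCount n (fun j => if j ∈ rseg n w p then w j + t else w j) ≤ jumpCount n w := by
  apply Finset.card_le_card
  intro k hk
  simp only [Finset.mem_filter, Finset.mem_univ, true_and] at hk ⊢
  by_cases h1 : k.castSucc ∈ rseg n w p <;> by_cases h2 : k.succ ∈ rseg n w p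
  · simp only [h1, h2, if_pos] at hk
    intro h; exact hk (by rw [h])
  · -- castSucc ∈, succ ∉ : w jumps at k
    simp only [rseg, Finset.mem_filter, Finset.mem_univ, true_and, not_and, not_forall] at h1 h2
    have hple : p ≤ k.succ := by
      have := h1.1
      simp only [Fin.le_def, Fin.coe_castSucc, Fin.val_succ] at this ⊢
      omega
    obtain ⟨k', hk'1, hk'2, hk'3⟩ := h2 hple
    by_cases hc : k'.succ ≤ k.castSucc
    · exact absurd (h1.2 k' hk'1 hc) hk'3
    · have : k' = k := by
        apply Fin.ext
        have e1 : (k.castSucc : ℕ) = (k : ℕ) := rfl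
        have e2 : (k.succ : ℕ) = (k : ℕ) + 1 := rfl
        have e3 : (k'.succ : ℕ) = (k' : ℕ) + 1 := rfl
        simp only [Fin.le_def, not_le, Fin.lt_def] at hc hk'2
        omega
      rw [this] at hk'3; exact hk'3
  · -- castSucc ∉, succ ∈ : k.succ = p
    simp only [rseg, Finset.mem_filter, Finset.mem_univ, true_and, not_and, not_forall] at h1 h2
    by_cases hc : p ≤ k.castSucc
    · obtain ⟨k', hk'1, hk'2, hk'3⟩ := h1 hc
      refine absurd (h2.2 k' hk'1 ?_) hk'3
      simp only [Fin.le_def, Fin.coe_castSucc, Fin.val_succ] at hk'2 ⊢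
      omega
    · have hps : k.succ = p := by
        apply Fin.ext
        have hh := h2.1
        have e1 : (k.castSucc : ℕ) = (k : ℕ) := rfl
        have e2 : (k.succ : ℕ) = (k : ℕ) + 1 := rfl
        simp only [Fin.le_def, not_le, Fin.lt_def] at hc hh
        omega
      exact hp k hps
  · simp only [h1, h2, if_neg, if_false] at hk
    exact hk

lemma mean_zero (n : ℕ) (g : Fin (n + 1) → ℝ) (γ : ℝ) (hγ : 0 < γ)
    (w : Fin (n + 1) → ℝ)
    (hmin : ∀ u : Fin (n + 1) → ℝ,
      (∑ i, (w i - g i) ^ 2) + γ * jumpCount n w ≤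
        (∑ i, (u i - g i) ^ 2) + γ * jumpCount n u)
    (M : Finset (Fin (n + 1))) (hM : M.Nonempty)
    (hJ : ∀ t : ℝ, jumpCount n (fun j => if j ∈ M then w j + t else w j) ≤ jumpCount n w) :
    ∑ j ∈ M, (w j - g j) = 0 := by
  set S := ∑ j ∈ M, (w j - g j) with hS
  have key : ∀ t : ℝ, 0 ≤ 2 * t * S + t ^ 2 * M.card := by
    intro t
    have h1 := hmin (fun j => if j ∈ M then w j + t else w j)
    have h2 : γ * (jumpCount n (fun j => if j ∈ M then w j + t else w j) : ℝ) ≤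
        γ * (jumpCount n w : ℝ) := by
      apply mul_le_mul_of_nonneg_left _ hγ.le
      exact_mod_cast hJ t
    have h3 : (∑ i, (w i - g i) ^ 2) ≤
        ∑ i, ((if i ∈ M then w i + t else w i) - g i) ^ 2 := by linarith
    have h4 : ∑ i, ((if i ∈ M then w i + t else w i) - g i) ^ 2 =
        (∑ i, (w i - g i) ^ 2) + (2 * t * S + t ^ 2 * M.card) := by
      have : ∀ i : Fin (n + 1), ((if i ∈ M then w i + t else w i) - g i) ^ 2 =
          (w i - g i) ^ 2 + (if i ∈ M then 2 * t * (w i - g i) + t ^ 2 else 0) := by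
        intro i
        by_cases h : i ∈ M <;> simp [h] <;> ring
      rw [Finset.sum_congr rfl fun i _ => this i, Finset.sum_add_distrib]
      congr 1
      rw [Finset.sum_ite_mem, Finset.univ_inter, Finset.sum_add_distrib, Finset.sum_const,
        ← Finset.mul_sum, nsmul_eq_mul, ← hS]
      ring
    linarith
  by_contra hne
  have hcard : (0 : ℝ) < M.card := by
    exact_mod_cast Finset.card_pos.2 hM
  have hm0 : (M.card : ℝ) ≠ 0 := hcard.ne'
  have hkey := key (-S / M.card)
  have hS2 : 0 < S ^ 2 := by positivity
  have heq : 2 * (-S / M.card) * S + (-S / M.card) ^ 2 * M.card = -(S ^ 2 / M.card) := by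
    field_simp
    ring
  rw [heq] at hkey
  have hpos : 0 < S ^ 2 / M.card := div_pos hS2 hcard
  linarith

lemma update_jump_cases_left (n : ℕ) (u : Fin (n + 1) → ℝ) (i k : Fin n)
    (hk : Function.update u i.castSucc (u i.succ) k.castSucc ≠
      Function.update u i.castSucc (u i.succ) k.succ) :
    (k.succ = i.castSucc ∧ u k.castSucc ≠ u i.succ) ∨ (k ≠ i ∧ u k.castSucc ≠ u k.succ) := by
  by_cases h1 : k.succ = i.castSucc
  · left
    refine ⟨h1, ?_⟩
    have hne : k.castSucc ≠ i.castSucc := by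
      intro h
      have e1 : (k.castSucc : ℕ) = (k : ℕ) := rfl
      have e2 : (k.succ : ℕ) = (k : ℕ) + 1 := rfl
      have := congrArg Fin.val h
      have := congrArg Fin.val h1
      omega
    rw [Function.update_of_ne hne, h1, Function.update_self] at hk
    exact hk
  · by_cases h2 : k.castSucc = i.castSucc
    · exfalso
      have hki : k = i := Fin.castSucc_injective _ h2
      subst hki
      have hne : k.succ ≠ k.castSucc := by
        intro h
        have := congrArg Fin.val h
        have e1 : (k.castSucc : ℕ) = (k : ℕ) := rfl
        have e2 : (k.succ : ℕ) = (k : ℕ) + 1 := rfl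
        omega
      rw [h2, Function.update_self, Function.update_of_ne hne] at hk
      exact hk rfl
    · right
      refine ⟨fun h => h2 (by rw [h]), ?_⟩
      rwa [Function.update_of_ne h2, Function.update_of_ne h1] at hk

lemma update_jump_cases_right (n : ℕ) (u : Fin (n + 1) → ℝ) (i k : Fin n)
    (hk : Function.update u i.succ (u i.castSucc) k.castSucc ≠
      Function.update u i.succ (u i.castSucc) k.succ) :
    (k.castSucc = i.succ) ∨ (k ≠ i ∧ u k.castSucc ≠ u k.succ) := by
  by_cases h1 : k.castSucc = i.succ
  · exact Or.inl h1
  · by_cases h2 : k.succ = i.succ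
    · exfalso
      have hki : k = i := Fin.succ_injective _ h2
      subst hki
      have hne : k.castSucc ≠ k.succ := by
        intro h
        have := congrArg Fin.val h
        have e1 : (k.castSucc : ℕ) = (k : ℕ) := rfl
        have e2 : (k.succ : ℕ) = (k : ℕ) + 1 := rfl
        omega
      rw [Function.update_of_ne hne, h2, Function.update_self] at hk
      exact hk rfl
    · right
      refine ⟨fun h => h2 (by rw [h]), ?_⟩
      rwa [Function.update_of_ne h1, Function.update_of_ne h2] at hk

lemma jump_v_le (n : ℕ) (u : Fin (n + 1) → ℝ) (i : Fin n) (hi : u i.castSucc ≠ u i.succ) :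
    jumpCount n (Function.update u i.castSucc (u i.succ)) ≤ jumpCount n u := by
  classical
  set A := Finset.univ.filter fun k : Fin n => u k.castSucc ≠ u k.succ with hA
  have hiA : i ∈ A := by simp [hA, hi]
  have hcard : 1 ≤ A.card := Finset.card_pos.2 ⟨i, hiA⟩
  by_cases hex : ∃ k₀ : Fin n, k₀.succ = i.castSucc
  · obtain ⟨k₀, hk₀⟩ := hex
    have hsub : (Finset.univ.filter fun k : Fin n =>
        Function.update u i.castSucc (u i.succ) k.castSucc ≠
          Function.update u i.castSucc (u i.succ) k.succ) ⊆ insert k₀ (A.erase i) := by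
      intro k hk
      simp only [Finset.mem_filter, Finset.mem_univ, true_and] at hk
      rcases update_jump_cases_left n u i k hk with ⟨h1, _⟩ | ⟨h1, h2⟩
      · have : k = k₀ := Fin.succ_injective _ (h1.trans hk₀.symm)
        simp [this]
      · simp [Finset.mem_insert, Finset.mem_erase, h1, hA, h2]
    calc jumpCount n (Function.update u i.castSucc (u i.succ))
        ≤ (insert k₀ (A.erase i)).card := Finset.card_le_card hsub
      _ ≤ (A.erase i).card + 1 := Finset.card_insert_le _ _
      _ = (A.card - 1) + 1 := by rw [Finset.card_erase_of_mem hiA]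
      _ = A.card := by omega
  · have hsub : (Finset.univ.filter fun k : Fin n =>
        Function.update u i.castSucc (u i.succ) k.castSucc ≠
          Function.update u i.castSucc (u i.succ) k.succ) ⊆ A.erase i := by
      intro k hk
      simp only [Finset.mem_filter, Finset.mem_univ, true_and] at hk
      rcases update_jump_cases_left n u i k hk with ⟨h1, _⟩ | ⟨h1, h2⟩
      · exact absurd ⟨k, h1⟩ hex
      · simp [Finset.mem_erase, h1, hA, h2]
    calc jumpCount n (Function.update u i.castSucc (u i.succ))
        ≤ (A.erase i).card := Finset.card_le_card hsub
      _ = A.card - 1 := Finset.card_erase_of_mem hiA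
      _ ≤ A.card := Nat.sub_le _ _

lemma jump_v_lt (n : ℕ) (u : Fin (n + 1) → ℝ) (i : Fin n) (hi : u i.castSucc ≠ u i.succ)
    (hdeg : ∀ k : Fin n, k.succ = i.castSucc → u k.castSucc = u i.succ) :
    jumpCount n (Function.update u i.castSucc (u i.succ)) < jumpCount n u := by
  classical
  set A := Finset.univ.filter fun k : Fin n => u k.castSucc ≠ u k.succ with hA
  have hiA : i ∈ A := by simp [hA, hi]
  have hcard : 1 ≤ A.card := Finset.card_pos.2 ⟨i, hiA⟩
  have hsub : (Finset.univ.filter fun k : Fin n =>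
      Function.update u i.castSucc (u i.succ) k.castSucc ≠
        Function.update u i.castSucc (u i.succ) k.succ) ⊆ A.erase i := by
    intro k hk
    simp only [Finset.mem_filter, Finset.mem_univ, true_and] at hk
    rcases update_jump_cases_left n u i k hk with ⟨h1, h2⟩ | ⟨h1, h2⟩
    · exact absurd (hdeg k h1) h2
    · simp [Finset.mem_erase, h1, hA, h2]
  calc jumpCount n (Function.update u i.castSucc (u i.succ))
      ≤ (A.erase i).card := Finset.card_le_card hsub
    _ = A.card - 1 := Finset.card_erase_of_mem hiA
    _ < A.card := by omega

lemma jump_w_le (n : ℕ) (u : Fin (n + 1) → ℝ) (i : Fin n) (hi : u i.castSucc ≠ u i.succ) :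
    jumpCount n (Function.update u i.succ (u i.castSucc)) ≤ jumpCount n u := by
  classical
  set A := Finset.univ.filter fun k : Fin n => u k.castSucc ≠ u k.succ with hA
  have hiA : i ∈ A := by simp [hA, hi]
  have hcard : 1 ≤ A.card := Finset.card_pos.2 ⟨i, hiA⟩
  by_cases hex : ∃ k₁ : Fin n, k₁.castSucc = i.succ
  · obtain ⟨k₁, hk₁⟩ := hex
    have hsub : (Finset.univ.filter fun k : Fin n =>
        Function.update u i.succ (u i.castSucc) k.castSucc ≠
          Function.update u i.succ (u i.castSucc) k.succ) ⊆ insert k₁ (A.erase i) := by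
      intro k hk
      simp only [Finset.mem_filter, Finset.mem_univ, true_and] at hk
      rcases update_jump_cases_right n u i k hk with h1 | ⟨h1, h2⟩
      · have : k = k₁ := Fin.castSucc_injective _ (h1.trans hk₁.symm)
        simp [this]
      · simp [Finset.mem_insert, Finset.mem_erase, h1, hA, h2]
    calc jumpCount n (Function.update u i.succ (u i.castSucc))
        ≤ (insert k₁ (A.erase i)).card := Finset.card_le_card hsub
      _ ≤ (A.erase i).card + 1 := Finset.card_insert_le _ _
      _ = (A.card - 1) + 1 := by rw [Finset.card_erase_of_mem hiA]
      _ = A.card := by omega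
  · have hsub : (Finset.univ.filter fun k : Fin n =>
        Function.update u i.succ (u i.castSucc) k.castSucc ≠
          Function.update u i.succ (u i.castSucc) k.succ) ⊆ A.erase i := by
      intro k hk
      simp only [Finset.mem_filter, Finset.mem_univ, true_and] at hk
      rcases update_jump_cases_right n u i k hk with h1 | ⟨h1, h2⟩
      · exact absurd ⟨k, h1⟩ hex
      · simp [Finset.mem_erase, h1, hA, h2]
    calc jumpCount n (Function.update u i.succ (u i.castSucc))
        ≤ (A.erase i).card := Finset.card_le_card hsub
      _ = A.card - 1 := Finset.card_erase_of_mem hiA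
      _ ≤ A.card := Nat.sub_le _ _

lemma data_update (n : ℕ) (g u : Fin (n + 1) → ℝ) (p : Fin (n + 1)) (x : ℝ) :
    ∑ j, (Function.update u p x j - g j) ^ 2 =
      (∑ j, (u j - g j) ^ 2) + ((x - g p) ^ 2 - (u p - g p) ^ 2) := by
  have h : ∀ j : Fin (n + 1), (Function.update u p x j - g j) ^ 2 =
      (u j - g j) ^ 2 + (if j = p then (x - g p) ^ 2 - (u p - g p) ^ 2 else 0) := by
    intro j
    by_cases hj : j = p
    · subst hj; rw [Function.update_self, if_pos rfl]; ring
    · rw [Function.update_of_ne hj, if_neg hj]; ring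
  rw [Finset.sum_congr rfl fun j _ => h j, Finset.sum_add_distrib,
    Finset.sum_ite_eq' Finset.univ p]
  simp

theorem potts_minimizer_jumpset_subset (n : ℕ) (g : Fin (n + 1) → ℝ) (γ : ℝ)
    (hγ : 0 < γ) (u' : Fin (n + 1) → ℝ)
    (hmin : ∀ u : Fin (n + 1) → ℝ,
      (∑ i, (u' i - g i) ^ 2) + γ * jumpCount n u' ≤
        (∑ i, (u i - g i) ^ 2) + γ * jumpCount n u) :
    ∀ i : Fin n, u' i.castSucc ≠ u' i.succ → g i.castSucc ≠ g i.succ := by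
  intro i hi hgeq
  classical
  set a := i.castSucc with ha
  set b := i.succ with hb
  have ev1 : (a : ℕ) = (i : ℕ) := rfl
  have ev2 : (b : ℕ) = (i : ℕ) + 1 := rfl
  have hab : a ≠ b := by intro h; have := congrArg Fin.val h; omega
  set v := Function.update u' a (u' b) with hv
  set w := Function.update u' b (u' a) with hw
  have hJv : jumpCount n v ≤ jumpCount n u' := jump_v_le n u' i hi
  have hJw : jumpCount n w ≤ jumpCount n u' := jump_w_le n u' i hi
  have dv : ∑ j, (v j - g j) ^ 2 =
      (∑ j, (u' j - g j) ^ 2) + ((u' b - g a) ^ 2 - (u' a - g a) ^ 2) :=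
    data_update n g u' a (u' b)
  have dw : ∑ j, (w j - g j) ^ 2 =
      (∑ j, (u' j - g j) ^ 2) + ((u' a - g a) ^ 2 - (u' b - g a) ^ 2) := by
    have := data_update n g u' b (u' a)
    rw [← hgeq] at this
    exact this
  have h1 := hmin v
  have h2 := hmin w
  rw [dv] at h1
  rw [dw] at h2
  have cast1 : γ * (jumpCount n v : ℝ) ≤ γ * (jumpCount n u' : ℝ) :=
    mul_le_mul_of_nonneg_left (Nat.cast_le.2 hJv) hγ.le
  have cast2 : γ * (jumpCount n w : ℝ) ≤ γ * (jumpCount n u' : ℝ) :=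
    mul_le_mul_of_nonneg_left (Nat.cast_le.2 hJw) hγ.le
  have hXpos : 0 ≤ (u' b - g a) ^ 2 - (u' a - g a) ^ 2 := by linarith
  have hXneg : (u' b - g a) ^ 2 - (u' a - g a) ^ 2 ≤ 0 := by linarith
  have hX0 : (u' b - g a) ^ 2 - (u' a - g a) ^ 2 = 0 := le_antisymm hXneg hXpos
  have hJveq : jumpCount n v = jumpCount n u' := by
    have hr : γ * (jumpCount n u' : ℝ) ≤ γ * (jumpCount n v : ℝ) := by linarith
    have := le_of_mul_le_mul_left hr hγ
    exact le_antisymm hJv (by exact_mod_cast this)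
  have hdeg : ¬ ∀ k : Fin n, k.succ = a → u' k.castSucc = u' b := by
    intro hdeg
    exact absurd hJveq (Nat.ne_of_lt (jump_v_lt n u' i hi hdeg))
  push_neg at hdeg
  obtain ⟨k₀, hk₀, hk₀ne⟩ := hdeg
  have hminv : ∀ u : Fin (n + 1) → ℝ,
      (∑ j, (v j - g j) ^ 2) + γ * jumpCount n v ≤
        (∑ j, (u j - g j) ^ 2) + γ * jumpCount n u := by
    intro u
    have := hmin u
    rw [dv, hJveq]
    linarith
  have hpu : ∀ k : Fin n, k.succ = b → u' k.castSucc ≠ u' k.succ := by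
    intro k hk
    have hki : k = i := Fin.succ_injective _ (hk.trans hb)
    subst hki
    exact hi
  have Su := mean_zero n g γ hγ u' hmin (rseg n u' b) ⟨b, self_mem_rseg n u' b⟩
    (rseg_perturb n u' b hpu)
  have hpv : ∀ k : Fin n, k.succ = a → v k.castSucc ≠ v k.succ := by
    intro k hk
    have hkk : k = k₀ := Fin.succ_injective _ (hk.trans hk₀.symm)
    subst hkk
    have hcs : k.castSucc ≠ a := by
      intro h
      have := congrArg Fin.val h
      have e1 : (k.castSucc : ℕ) = (k : ℕ) := rfl
      have e2 : (k.succ : ℕ) = (k : ℕ) + 1 := rfl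
      have := congrArg Fin.val hk
      omega
    rw [hk, hv, Function.update_of_ne hcs, Function.update_self]
    exact hk₀ne
  have Sv := mean_zero n g γ hγ v hminv (rseg n v a) ⟨a, self_mem_rseg n v a⟩
    (rseg_perturb n v a hpv)
  have hanot : a ∉ rseg n u' b := by
    simp only [rseg, Finset.mem_filter, Finset.mem_univ, true_and, not_and]
    intro hba
    exfalso
    rw [Fin.le_def] at hba
    omega
  have hset : rseg n v a = insert a (rseg n u' b) := by
    ext j
    simp only [rseg, Finset.mem_filter, Finset.mem_univ, true_and, Finset.mem_insert]
    constructor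
    · rintro ⟨hj1, hj2⟩
      by_cases hja : j = a
      · exact Or.inl hja
      · right
        have hja' : (a : ℕ) < (j : ℕ) := by
          rcases lt_of_le_of_ne hj1 (Ne.symm hja) with h
          rwa [Fin.lt_def] at h
        have hbj : b ≤ j := by rw [Fin.le_def]; omega
        refine ⟨hbj, fun k hk1 hk2 => ?_⟩
        have e1 : (k.castSucc : ℕ) = (k : ℕ) := rfl
        have e2 : (k.succ : ℕ) = (k : ℕ) + 1 := rfl
        rw [Fin.le_def] at hk1
        have hak : a ≤ k.castSucc := by rw [Fin.le_def]; omega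
        have hcsa : k.castSucc ≠ a := by
          intro h; have := congrArg Fin.val h; omega
        have hssa : k.succ ≠ a := by
          intro h; have := congrArg Fin.val h; omega
        have := hj2 k hak hk2
        rwa [hv, Function.update_of_ne hcsa, Function.update_of_ne hssa] at this
    · rintro (hja | ⟨hj1, hj2⟩)
      · subst hja
        have := self_mem_rseg n v a
        simpa [rseg] using this
      · have hbj : (b : ℕ) ≤ (j : ℕ) := by rw [Fin.le_def] at hj1; omega
        refine ⟨by rw [Fin.le_def]; omega, fun k hk1 hk2 => ?_⟩
        have e1 : (k.castSucc : ℕ) = (k : ℕ) := rfl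
        have e2 : (k.succ : ℕ) = (k : ℕ) + 1 := rfl
        rw [Fin.le_def] at hk1
        by_cases hka : k.castSucc = a
        · have hki : k = i := Fin.castSucc_injective _ (hka.trans ha)
          subst hki
          have hsb : k.succ = b := hb ▸ rfl
          rw [hka, hsb, hv, Function.update_self, Function.update_of_ne (Ne.symm hab)]
        · have hkb : b ≤ k.castSucc := by
            rw [Fin.le_def]
            have : (a : ℕ) ≠ (k.castSucc : ℕ) := fun h => hka (Fin.ext h.symm)
            omega
          have hcsa : k.castSucc ≠ a := hka
          have hssa : k.succ ≠ a := by
            intro h; have := congrArg Fin.val h; rw [Fin.le_def] at hkb; omega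
          rw [hv, Function.update_of_ne hcsa, Function.update_of_ne hssa]
          exact hj2 k hkb hk2
  rw [hset, Finset.sum_insert hanot] at Sv
  have hvr : ∀ j ∈ rseg n u' b, (v j - g j) = (u' j - g j) := by
    intro j hj
    simp only [rseg, Finset.mem_filter, Finset.mem_univ, true_and] at hj
    obtain ⟨hj1, -⟩ := hj
    have hja : j ≠ a := by
      intro h
      have := congrArg Fin.val h
      rw [Fin.le_def] at hj1
      omega
    rw [hv, Function.update_of_ne hja]
  rw [Finset.sum_congr rfl hvr, Su] at Sv
  have hva : v a = u' b := Function.update_self _ _ _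
  rw [hva] at Sv
  have hrc : u' b = g a := by linarith
  have hsa : u' a = g a := by nlinarith [hX0, hrc]
  exact hi (hsa.trans hrc.symm)
end

section
/- Dynamic programming recursion for the univariate Potts problem: let $g \in \mathbb{R}^n$, $\gamma > 0$, and let $P_r$ denote the minimal value of $u \mapsto \sum_{i=1}^r (u_i - g_i)^2 + \gamma\,\#\{i < r : u_i \neq u_{i+1}\}$ over $u \in \mathbb{R}^r$, with $P_0 := -\gamma$. Then for all $1 \le r \le n$: $P_r = \min_{1 \le l \le r} \big( P_{l-1} + \gamma + \mathcal{E}_{l:r} \big)$, where $\mathcal{E}_{l:r} = \sum_{i=l}^r (g_i - \mu_{l:r})^2$ and $\mu_{l:r} = \frac{1}{r-l+1}\sum_{i=l}^r g_i$. -/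
/-- Minimal value of the univariate Potts problem on the prefix of length `r`
of the data sequence `g`, with `P 0 = -γ`. -/
noncomputable def pottsVal (γ : ℝ) (g : ℕ → ℝ) : ℕ → ℝ
  | 0 => -γ
  | r + 1 => sInf { v : ℝ | ∃ u : ℕ → ℝ, v =
      (∑ i ∈ Finset.range (r + 1), (u i - g i) ^ 2) +
        γ * ((Finset.range r).filter fun i => u i ≠ u (i + 1)).card }

def pottsSet (γ : ℝ) (g : ℕ → ℝ) (r : ℕ) : Set ℝ :=
  { v : ℝ | ∃ u : ℕ → ℝ, v =
      (∑ i ∈ Finset.range r, (u i - g i) ^ 2) +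
        γ * ((Finset.range (r-1)).filter fun i => u i ≠ u (i + 1)).card }

lemma pottsVal_eq' (γ : ℝ) (g : ℕ → ℝ) (r : ℕ) (hr : 1 ≤ r) :
    pottsVal γ g r = sInf (pottsSet γ g r) := by
  obtain ⟨r', rfl⟩ : ∃ r', r = r' + 1 := ⟨r - 1, by omega⟩
  rfl

lemma pottsSet_nonempty (γ : ℝ) (g : ℕ → ℝ) (r : ℕ) : (pottsSet γ g r).Nonempty :=
  ⟨_, g, rfl⟩

lemma pottsSet_bdd (γ : ℝ) (hγ : 0 < γ) (g : ℕ → ℝ) (r : ℕ) :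
    BddBelow (pottsSet γ g r) := by
  refine ⟨0, ?_⟩
  rintro v ⟨u, rfl⟩
  positivity

/-- quadratic min at mean -/
lemma mean_min (I : Finset ℕ) (hI : I.Nonempty) (g : ℕ → ℝ) (c : ℝ) :
    ∑ i ∈ I, (g i - (∑ j ∈ I, g j) / (I.card : ℝ)) ^ 2 ≤ ∑ i ∈ I, (c - g i) ^ 2 := by
  have hN : (0:ℝ) < (I.card : ℝ) := by
    exact_mod_cast Nat.cast_pos.mpr (Finset.card_pos.mpr hI)
  have expand : ∀ c : ℝ, ∑ i ∈ I, (c - g i) ^ 2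
      = (I.card : ℝ) * c ^ 2 - 2 * c * (∑ j ∈ I, g j) + ∑ j ∈ I, (g j) ^ 2 := by
    intro c
    have h := Finset.sum_congr rfl fun i (_ : i ∈ I) =>
      (by ring : (c - g i) ^ 2 = c ^ 2 - 2 * c * g i + g i ^ 2)
    rw [h, Finset.sum_add_distrib, Finset.sum_sub_distrib, ← Finset.mul_sum,
      Finset.sum_const, nsmul_eq_mul]
  have h1 : ∑ i ∈ I, (g i - (∑ j ∈ I, g j) / (I.card : ℝ)) ^ 2
      = ∑ i ∈ I, (((∑ j ∈ I, g j) / (I.card : ℝ)) - g i) ^ 2 := by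
    apply Finset.sum_congr rfl; intro i _; ring
  rw [h1, expand, expand]
  set N := (I.card : ℝ)
  set S := ∑ j ∈ I, g j
  have this1 : N * (S / N) ^ 2 - 2 * (S/N) * S = -(S^2 / N) := by field_simp; ring
  have h2 : -(S^2 / N) ≤ N*c^2 - 2*c*S := by
    rw [neg_le, le_div_iff₀ hN]
    nlinarith [sq_nonneg (N*c - S)]
  linarith

theorem potts_bellman_recursion (γ : ℝ) (hγ : 0 < γ) (g : ℕ → ℝ) (n r : ℕ)
    (hr : 1 ≤ r) (hrn : r ≤ n) :
    pottsVal γ g r =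
      (Finset.Icc 1 r).inf' (Finset.nonempty_Icc.mpr hr) fun l =>
        pottsVal γ g (l - 1) + γ +
          ∑ i ∈ Finset.Icc (l - 1) (r - 1),
            (g i - (∑ j ∈ Finset.Icc (l - 1) (r - 1), g j) / ((r - l + 1 : ℕ) : ℝ)) ^ 2 := by
  classical
  have hbdd := pottsSet_bdd γ hγ g r
  have hne := pottsSet_nonempty γ g r
  rw [pottsVal_eq' γ g r hr]
  apply le_antisymm
  · -- sInf ≤ inf'
    apply Finset.le_inf'
    intro l hl
    rw [Finset.mem_Icc] at hl
    obtain ⟨hl1, hlr⟩ := hl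
    have hIcc : Finset.Icc (l-1) (r-1) = Finset.Ico (l-1) r := by
      rw [← Finset.Ico_add_one_right_eq_Icc]; congr 1; omega
    have hcard : (Finset.Icc (l-1) (r-1)).card = r - l + 1 := by
      rw [Nat.card_Icc]; omega
    set μ := (∑ j ∈ Finset.Icc (l-1) (r-1), g j) / ((r - l + 1 : ℕ) : ℝ) with hμ
    set E := ∑ i ∈ Finset.Icc (l-1) (r-1), (g i - μ) ^ 2 with hE
    rcases eq_or_lt_of_le hl1 with h1 | h2
    · -- l = 1
      have hl0 : l = 1 := h1.symm
      subst hl0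
      have hmem : ((∑ i ∈ Finset.range r, ((fun _ => μ) i - g i) ^ 2) +
          γ * ((Finset.range (r-1)).filter fun i =>
            (fun _ => μ) i ≠ (fun _ => μ) (i + 1)).card) ∈ pottsSet γ g r :=
        ⟨fun _ => μ, rfl⟩
      have hle := csInf_le hbdd hmem
      simp only [ne_eq, not_true_eq_false, Finset.filter_false, Finset.card_empty,
        Nat.cast_zero, mul_zero, add_zero] at hle
      have hsum : (∑ i ∈ Finset.range r, (μ - g i) ^ 2) = E := by
        rw [hE, hIcc]
        simp only [Nat.sub_self, Finset.range_eq_Ico]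
        apply Finset.sum_congr rfl
        intro i _; ring
      have : pottsVal γ g (1 - 1) = -γ := rfl
      rw [this]
      calc sInf (pottsSet γ g r) ≤ ∑ i ∈ Finset.range r, (μ - g i) ^ 2 := hle
        _ = E := hsum
        _ = -γ + γ + E := by ring
    · -- 2 ≤ l
      set m := l - 1 with hm
      have hm1 : 1 ≤ m := by omega
      have hmr : m ≤ r - 1 := by omega
      rw [pottsVal_eq' γ g m (by omega)]
      have key : ∀ v ∈ pottsSet γ g m, sInf (pottsSet γ g r) ≤ v + γ + E := by
        rintro v ⟨u, rfl⟩
        set u' : ℕ → ℝ := fun i => if i < m then u i else μ with hu'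
        have hmem : ((∑ i ∈ Finset.range r, (u' i - g i) ^ 2) +
            γ * ((Finset.range (r-1)).filter fun i => u' i ≠ u' (i + 1)).card)
            ∈ pottsSet γ g r := ⟨u', rfl⟩
        refine le_trans (csInf_le hbdd hmem) ?_
        -- split the sum
        have hsplit : (∑ i ∈ Finset.range r, (u' i - g i) ^ 2)
            = (∑ i ∈ Finset.range m, (u i - g i) ^ 2) + E := by
          rw [← Finset.sum_range_add_sum_Ico _ (by omega : m ≤ r)]
          congr 1
          · apply Finset.sum_congr rfl
            intro i hi
            rw [Finset.mem_range] at hi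
            simp [hu', if_pos hi]
          · rw [hE, hIcc]
            apply Finset.sum_congr rfl
            intro i hi
            rw [Finset.mem_Ico] at hi
            have : ¬ i < m := by omega
            simp only [hu', if_neg this]
            ring
        -- bound the jumps
        have hcardle : ((Finset.range (r-1)).filter fun i => u' i ≠ u' (i + 1)).card
            ≤ ((Finset.range (m-1)).filter fun i => u i ≠ u (i + 1)).card + 1 := by
          have hsub : (Finset.range (r-1)).filter (fun i => u' i ≠ u' (i + 1))
              ⊆ insert (m-1) ((Finset.range (m-1)).filter fun i => u i ≠ u (i + 1)) := by
            intro i hi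
            rw [Finset.mem_filter, Finset.mem_range] at hi
            obtain ⟨hir, hne⟩ := hi
            rcases lt_trichotomy i (m-1) with h | h | h
            · apply Finset.mem_insert_of_mem
              rw [Finset.mem_filter, Finset.mem_range]
              refine ⟨h, ?_⟩
              have h1 : i < m := by omega
              have h2 : i + 1 < m := by omega
              simpa [hu', if_pos h1, if_pos h2] using hne
            · simp [h]
            · exfalso
              have h1 : ¬ i < m := by omega
              have h2 : ¬ i + 1 < m := by omega
              simp [hu', if_neg h1, if_neg h2] at hne
          calc _ ≤ (insert (m-1) ((Finset.range (m-1)).filter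
                fun i => u i ≠ u (i + 1))).card := Finset.card_le_card hsub
            _ ≤ ((Finset.range (m-1)).filter fun i => u i ≠ u (i + 1)).card + 1 :=
                Finset.card_insert_le _ _
        rw [hsplit]
        have := mul_le_mul_of_nonneg_left
          (by exact_mod_cast Nat.cast_le.mpr hcardle :
            (((Finset.range (r-1)).filter fun i => u' i ≠ u' (i + 1)).card : ℝ)
            ≤ (((Finset.range (m-1)).filter fun i => u i ≠ u (i + 1)).card : ℝ) + 1)
          (le_of_lt hγ)
        push_cast at this ⊢
        linarith
      have hge : sInf (pottsSet γ g r) - γ - E ≤ sInf (pottsSet γ g m) :=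
        le_csInf (pottsSet_nonempty γ g m) (fun v hv => by linarith [key v hv])
      linarith
  · -- inf' ≤ sInf
    apply le_csInf hne
    rintro v ⟨u, rfl⟩
    set c := u (r-1) with hc
    have hex : ∃ k, ∀ i ∈ Finset.Icc k (r-1), u i = c := by
      refine ⟨r-1, ?_⟩
      intro i hi
      rw [Finset.mem_Icc] at hi
      have : i = r - 1 := by omega
      rw [this]
    set m := Nat.find hex with hmdef
    have hmspec : ∀ i ∈ Finset.Icc m (r-1), u i = c := Nat.find_spec hex
    have hmle : m ≤ r - 1 := Nat.find_le (by
      intro i hi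
      rw [Finset.mem_Icc] at hi
      have : i = r - 1 := by omega
      rw [this])
    rcases Nat.eq_zero_or_pos m with hm0 | hm1
    · -- m = 0: use l = 1
      have hmem1 : (1 : ℕ) ∈ Finset.Icc 1 r := by rw [Finset.mem_Icc]; omega
      refine le_trans (Finset.inf'_le _ hmem1) ?_
      have hpv : pottsVal γ g (1 - 1) = -γ := rfl
      rw [hpv]
      have hIcc : Finset.Icc (0:ℕ) (r-1) = Finset.range r := by
        rw [← Finset.Ico_add_one_right_eq_Icc, Finset.range_eq_Ico]; congr 1; omega
      have hcard : (Finset.Icc (0:ℕ) (r-1)).card = r - 1 + 1 := by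
        rw [Nat.card_Icc]; omega
      have hconst : ∀ i ∈ Finset.range r, u i = c := by
        intro i hi
        rw [Finset.mem_range] at hi
        exact hmspec i (by rw [Finset.mem_Icc]; omega)
      have h1 : ∑ i ∈ Finset.Icc (1-1 : ℕ) (r-1),
            (g i - (∑ j ∈ Finset.Icc (1-1:ℕ) (r-1), g j) / ((r - 1 + 1 : ℕ) : ℝ)) ^ 2
          ≤ ∑ i ∈ Finset.range r, (u i - g i) ^ 2 := by
        have h2 : ∑ i ∈ Finset.range r, (u i - g i) ^ 2
            = ∑ i ∈ Finset.Icc (0:ℕ) (r-1), (c - g i) ^ 2 := by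
          rw [hIcc]
          apply Finset.sum_congr rfl
          intro i hi
          rw [hconst i hi]
        rw [h2]
        have := mean_min (Finset.Icc (0:ℕ) (r-1)) ⟨0, by rw [Finset.mem_Icc]; omega⟩ g c
        rw [hcard] at this
        simpa using this
      have hγcard : 0 ≤ γ * (((Finset.range (r-1)).filter
          fun i => u i ≠ u (i+1)).card : ℝ) := by positivity
      simp only [Nat.sub_self] at h1 ⊢
      linarith
    · -- m ≥ 1: use l = m + 1
      have hmem1 : m + 1 ∈ Finset.Icc 1 r := by rw [Finset.mem_Icc]; omega
      refine le_trans (Finset.inf'_le _ hmem1) ?_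
      simp only [Nat.add_sub_cancel]
      -- u (m-1) ≠ u m
      have hnotpred : ¬ ∀ i ∈ Finset.Icc (m-1) (r-1), u i = c :=
        Nat.find_min hex (by omega)
      push_neg at hnotpred
      obtain ⟨i0, hi0mem, hi0ne⟩ := hnotpred
      rw [Finset.mem_Icc] at hi0mem
      have hi0 : i0 = m - 1 := by
        by_contra h
        exact hi0ne (hmspec i0 (by rw [Finset.mem_Icc]; omega))
      have hjump : u (m-1) ≠ u ((m-1)+1) := by
        rw [show (m-1)+1 = m by omega]
        rw [hi0] at hi0ne
        intro h
        exact hi0ne (h.trans (hmspec m (by rw [Finset.mem_Icc]; omega)))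
      -- the prefix cost is in pottsSet γ g m
      have hpre : ((∑ i ∈ Finset.range m, (u i - g i) ^ 2) +
          γ * ((Finset.range (m-1)).filter fun i => u i ≠ u (i + 1)).card)
          ∈ pottsSet γ g m := ⟨u, rfl⟩
      have hprele : pottsVal γ g m ≤ (∑ i ∈ Finset.range m, (u i - g i) ^ 2) +
          γ * ((Finset.range (m-1)).filter fun i => u i ≠ u (i + 1)).card := by
        rw [pottsVal_eq' γ g m hm1]
        exact csInf_le (pottsSet_bdd γ hγ g m) hpre
      -- jump count lower bound
      have hcardge : ((Finset.range (m-1)).filter fun i => u i ≠ u (i + 1)).card + 1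
          ≤ ((Finset.range (r-1)).filter fun i => u i ≠ u (i + 1)).card := by
        have hnotmem : (m-1) ∉ (Finset.range (m-1)).filter fun i => u i ≠ u (i + 1) := by
          simp
        have hsub : insert (m-1) ((Finset.range (m-1)).filter fun i => u i ≠ u (i + 1))
            ⊆ (Finset.range (r-1)).filter fun i => u i ≠ u (i + 1) := by
          intro i hi
          rcases Finset.mem_insert.mp hi with h | h
          · subst h
            rw [Finset.mem_filter, Finset.mem_range]
            exact ⟨by omega, hjump⟩
          · rw [Finset.mem_filter, Finset.mem_range] at h ⊢
            exact ⟨by omega, h.2⟩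
        calc _ = (insert (m-1) ((Finset.range (m-1)).filter
              fun i => u i ≠ u (i + 1))).card := (Finset.card_insert_of_notMem hnotmem).symm
          _ ≤ _ := Finset.card_le_card hsub
      -- tail sum bound
      have hIcc : Finset.Icc m (r-1) = Finset.Ico m r := by
        rw [← Finset.Ico_add_one_right_eq_Icc]; congr 1; omega
      have hcard : (Finset.Icc m (r-1)).card = r - (m+1) + 1 := by
        rw [Nat.card_Icc]; omega
      have htail : ∑ i ∈ Finset.Icc m (r-1),
            (g i - (∑ j ∈ Finset.Icc m (r-1), g j) / ((r - (m+1) + 1 : ℕ) : ℝ)) ^ 2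
          ≤ ∑ i ∈ Finset.Ico m r, (u i - g i) ^ 2 := by
        have h2 : ∑ i ∈ Finset.Ico m r, (u i - g i) ^ 2
            = ∑ i ∈ Finset.Icc m (r-1), (c - g i) ^ 2 := by
          rw [hIcc]
          apply Finset.sum_congr rfl
          intro i hi
          rw [Finset.mem_Ico] at hi
          rw [hmspec i (by rw [Finset.mem_Icc]; omega)]
        rw [h2]
        have := mean_min (Finset.Icc m (r-1)) ⟨m, by rw [Finset.mem_Icc]; omega⟩ g c
        rw [hcard] at this
        exact this
      -- combine
      have hsplit : (∑ i ∈ Finset.range r, (u i - g i) ^ 2)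
          = (∑ i ∈ Finset.range m, (u i - g i) ^ 2)
            + ∑ i ∈ Finset.Ico m r, (u i - g i) ^ 2 :=
        (Finset.sum_range_add_sum_Ico _ (by omega : m ≤ r)).symm
      have hγc : γ * ((((Finset.range (m-1)).filter
            fun i => u i ≠ u (i + 1)).card : ℝ) + 1)
          ≤ γ * (((Finset.range (r-1)).filter fun i => u i ≠ u (i + 1)).card : ℝ) := by
        apply mul_le_mul_of_nonneg_left _ (le_of_lt hγ)
        exact_mod_cast hcardge
      rw [hsplit]
      push_cast at hγc htail ⊢
      linarith
end

section
/- Let $F(u_1,u_2)$ be the block-wise jump count and $\beta > 0$, and let $(\bar u_1, \bar u_2)$ be a minimizer of $(w_1,w_2) \mapsto F(w_1,w_2) + \frac{1}{2\beta}(\|u_1 - w_1\|^2 + \|u_2 - w_2\|^2)$. Define $v = ((\bar u_1,\bar u_2) - (u_1,u_2))/\delta$ with $\delta = \|(\bar u_1,\bar u_2) - (u_1,u_2)\|$ if $\delta > 0$, else $v = 0$. Then $\|v\| \le 1$ and $F((u_1,u_2) + t v) \le F(u_1,u_2)$ for all $t \ge 0$. -/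
open Finset

/-- jump indicator -/
noncomputable def jp (x y : ℝ) : ℝ := if x = y then 0 else 1

lemma jp_nonneg (x y : ℝ) : 0 ≤ jp x y := by unfold jp; split <;> norm_num
lemma jp_le_one (x y : ℝ) : jp x y ≤ 1 := by unfold jp; split <;> norm_num
lemma jp_self (x : ℝ) : jp x x = 0 := by simp [jp]
lemma jp_of_ne {x y : ℝ} (h : x ≠ y) : jp x y = 1 := by simp [jp, h]

/-- 1D jump count (real valued). -/
noncomputable def J1 (n : ℕ) (g : ℕ → ℝ) : ℝ := ∑ k ∈ Finset.range n, jp (g k) (g (k+1))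

/-- 1D squared norm. -/
noncomputable def Q1 (n : ℕ) (g : ℕ → ℝ) : ℝ := ∑ k ∈ Finset.range (n+1), (g k)^2

lemma sum_range_two_diff (n k1 k2 : ℕ) (F G : ℕ → ℝ) (hk : k1 ≠ k2)
    (h0 : ∀ k, k < n → k ≠ k1 → k ≠ k2 → F k = G k) :
    ∑ k ∈ Finset.range n, F k = (∑ k ∈ Finset.range n, G k)
      + (if k1 < n then F k1 - G k1 else 0) + (if k2 < n then F k2 - G k2 else 0) := by
  have key : ∑ k ∈ Finset.range n, (F k - G k)
      = (if k1 < n then F k1 - G k1 else 0) + (if k2 < n then F k2 - G k2 else 0) := by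
    have hpt : ∀ k ∈ Finset.range n, F k - G k
        = (if k1 = k then F k - G k else 0) + (if k2 = k then F k - G k else 0) := by
      intro k hkn
      rw [Finset.mem_range] at hkn
      by_cases h1 : k1 = k
      · rw [if_pos h1, if_neg (by omega)]; ring
      · by_cases h2 : k2 = k
        · rw [if_neg h1, if_pos h2]; ring
        · rw [if_neg h1, if_neg h2, h0 k hkn (by omega) (by omega)]; ring
    rw [Finset.sum_congr rfl hpt, Finset.sum_add_distrib,
      Finset.sum_ite_eq, Finset.sum_ite_eq]
    simp [Finset.mem_range]
  have := Finset.sum_sub_distrib (s := Finset.range n) (f := F) (g := G)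
  rw [this] at key
  linarith

lemma mean_opt (lo hi : ℕ) (hle : lo ≤ hi) (f : ℕ → ℝ) (b : ℝ)
    (h : ∀ x : ℝ, 0 ≤ ∑ k ∈ Finset.Icc lo hi, ((f k - x)^2 - (f k - b)^2)) :
    ∑ k ∈ Finset.Icc lo hi, f k = ((hi + 1 - lo : ℕ) : ℝ) * b := by
  set K : ℝ := ((hi + 1 - lo : ℕ) : ℝ) with hK
  set S : ℝ := ∑ k ∈ Finset.Icc lo hi, f k with hS
  have hKcard : ((Finset.Icc lo hi).card : ℝ) = K := by
    rw [hK, Nat.card_Icc lo hi]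
  have hKpos : (0:ℝ) < K := by
    rw [hK]; exact_mod_cast Nat.pos_of_ne_zero (by omega)
  have hsum : ∀ x : ℝ, ∑ k ∈ Finset.Icc lo hi, ((f k - x)^2 - (f k - b)^2)
      = (b - x) * (2 * S - K * (x + b)) := by
    intro x
    have hexp : ∀ k ∈ Finset.Icc lo hi, (f k - x)^2 - (f k - b)^2
        = (b - x) * (2 * f k) - (b - x) * (x + b) := by
      intro k _; ring
    rw [Finset.sum_congr rfl hexp, Finset.sum_sub_distrib, ← Finset.mul_sum,
      Finset.sum_const, ← Finset.mul_sum, nsmul_eq_mul, hKcard, ← hS]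
    ring
  have h6 := h (S / K)
  rw [hsum] at h6
  have h7 : (b - S/K) * (2*S - K*(S/K + b)) = -((S - K*b)^2) / K := by
    field_simp
    ring
  rw [h7] at h6
  have h8 : (S - K*b)^2 ≤ 0 := by
    rw [div_nonneg_iff] at h6
    rcases h6 with ⟨h9, _⟩ | ⟨h9, h10⟩
    · nlinarith
    · nlinarith
  nlinarith [sq_nonneg (S - K*b)]

lemma run_mean (n : ℕ) (lam : ℝ) (hlam : 0 < lam) (f g : ℕ → ℝ)
    (hmin : ∀ g' : ℕ → ℝ, J1 n g + lam * Q1 n (fun k => f k - g k)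
      ≤ J1 n g' + lam * Q1 n (fun k => f k - g' k))
    (l m : ℕ) (hlm : l ≤ m) (hmn : m < n) (b : ℝ)
    (hconst : ∀ k, l ≤ k → k ≤ m → g k = b)
    (hbelow : g (m+1) ≠ b)
    (habove : l = 0 ∨ g (l-1) ≠ b) :
    ∑ k ∈ Finset.Icc l m, f k = ((m + 1 - l : ℕ) : ℝ) * b := by
  apply mean_opt l m hlm
  intro x
  set gx : ℕ → ℝ := fun k => if l ≤ k ∧ k ≤ m then x else g k with hgx
  have hgx_in : ∀ k, l ≤ k → k ≤ m → gx k = x := by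
    intro k h1 h2; simp [hgx, h1, h2]
  have hgx_out : ∀ k, ¬(l ≤ k ∧ k ≤ m) → gx k = g k := by
    intro k h1; simp only [hgx]; rw [if_neg h1]
  -- Q difference
  have hQ : Q1 n (fun k => f k - gx k) - Q1 n (fun k => f k - g k)
      = ∑ k ∈ Finset.Icc l m, ((f k - x)^2 - (f k - b)^2) := by
    unfold Q1
    rw [← Finset.sum_sub_distrib]
    rw [← Finset.sum_subset (s₁ := Finset.Icc l m)
      (f := fun k => (f k - gx k)^2 - (f k - g k)^2)
      (by intro k hk; rw [Finset.mem_Icc] at hk; rw [Finset.mem_range]; omega)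
      (by intro k _ hk
          rw [Finset.mem_Icc] at hk
          show (f k - gx k)^2 - (f k - g k)^2 = 0
          rw [hgx_out k (by omega)]; ring)]
    apply Finset.sum_congr rfl
    intro k hk
    rw [Finset.mem_Icc] at hk
    show (f k - gx k)^2 - (f k - g k)^2 = (f k - x)^2 - (f k - b)^2
    rw [hgx_in k hk.1 hk.2, hconst k hk.1 hk.2]
  -- J difference
  set k1 : ℕ := if l = 0 then n else l - 1 with hk1
  have hk1m : k1 ≠ m := by
    rcases Nat.eq_zero_or_pos l with h | h
    · rw [hk1, if_pos h]; omega
    · rw [hk1, if_neg (by omega)]; omega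
  have h0 : ∀ k, k < n → k ≠ k1 → k ≠ m →
      (fun k => jp (gx k) (gx (k+1))) k = (fun k => jp (g k) (g (k+1))) k := by
    intro k hkn hne1 hne2
    show jp (gx k) (gx (k+1)) = jp (g k) (g (k+1))
    have htri : k + 1 < l ∨ (l ≤ k ∧ k + 1 ≤ m) ∨ m < k := by
      rcases Nat.eq_zero_or_pos l with h | h
      · rw [hk1, if_pos h] at hne1; omega
      · rw [hk1, if_neg (by omega)] at hne1; omega
    rcases htri with h | h | h
    · rw [hgx_out k (by omega), hgx_out (k+1) (by omega)]
    · rw [hgx_in k h.1 (by omega), hgx_in (k+1) (by omega) h.2,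
        hconst k h.1 (by omega), hconst (k+1) (by omega) h.2, jp_self, jp_self]
    · rw [hgx_out k (by omega), hgx_out (k+1) (by omega)]
  have hJd : J1 n gx = J1 n g
      + (if k1 < n then jp (gx k1) (gx (k1+1)) - jp (g k1) (g (k1+1)) else 0)
      + (if m < n then jp (gx m) (gx (m+1)) - jp (g m) (g (m+1)) else 0) := by
    unfold J1
    exact sum_range_two_diff n k1 m _ _ hk1m h0
  have hterm_m : jp (gx m) (gx (m+1)) - jp (g m) (g (m+1)) ≤ 0 := by
    rw [hgx_in m hlm le_rfl, hgx_out (m+1) (by omega), hconst m hlm le_rfl,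
      jp_of_ne (fun h => hbelow h.symm)]
    have := jp_le_one x (g (m+1)); linarith
  have hterm_k1 : (if k1 < n then jp (gx k1) (gx (k1+1)) - jp (g k1) (g (k1+1)) else 0) ≤ 0 := by
    rcases Nat.eq_zero_or_pos l with h | h
    · rw [hk1, if_pos h, if_neg (lt_irrefl n)]
    · rw [hk1, if_neg (show ¬ l = 0 by omega)]
      split
      · rw [hgx_out (l-1) (by omega), show l - 1 + 1 = l by omega,
          hgx_in l le_rfl hlm, hconst l le_rfl hlm,
          jp_of_ne (habove.resolve_left (by omega))]
        have := jp_le_one (g (l-1)) x; linarith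
      · exact le_rfl
  have hJ : J1 n gx ≤ J1 n g := by
    rw [hJd, if_pos hmn]
    linarith
  have h1 := hmin gx
  rw [← hQ]
  nlinarith [h1, hJ]

lemma jp_sub_ge_one {x y z : ℝ} (h : 1 ≤ jp x z - jp y z) : y = z ∧ x ≠ z := by
  constructor
  · by_contra hne
    rw [jp_of_ne hne] at h
    have := jp_le_one x z
    linarith
  · intro hxz
    rw [hxz, jp_self] at h
    have := jp_nonneg y z
    linarith

lemma oneD (n : ℕ) (lam : ℝ) (hlam : 0 < lam) (f g0 : ℕ → ℝ)
    (hmin : ∀ g : ℕ → ℝ, J1 n g0 + lam * Q1 n (fun k => f k - g0 k)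
      ≤ J1 n g + lam * Q1 n (fun k => f k - g k))
    (i : ℕ) (hin : i < n) (hf : f i = f (i+1)) : g0 i = g0 (i+1) := by
  classical
  by_contra hbc
  -- competitor A : set position i+1 to the value g0 i
  set gA : ℕ → ℝ := fun k => if k = i+1 then g0 i else g0 k with hgAdef
  have hgAi1 : gA (i+1) = g0 i := by simp [hgAdef]
  have hgA : ∀ k, k ≠ i+1 → gA k = g0 k := by
    intro k hk; simp only [hgAdef]; rw [if_neg hk]
  -- competitor B : set position i to the value g0 (i+1)
  set gB : ℕ → ℝ := fun k => if k = i then g0 (i+1) else g0 k with hgBdef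
  have hgBi : gB i = g0 (i+1) := by simp [hgBdef]
  have hgB : ∀ k, k ≠ i → gB k = g0 k := by
    intro k hk; simp only [hgBdef]; rw [if_neg hk]
  set tA : ℝ := if i+1 < n then jp (g0 i) (g0 (i+1+1)) - jp (g0 (i+1)) (g0 (i+1+1)) else 0 with htAdef
  set tB : ℝ := if 1 ≤ i then jp (g0 (i-1)) (g0 (i+1)) - jp (g0 (i-1)) (g0 i) else 0 with htBdef
  -- J computation for A
  have hJA : J1 n gA = J1 n g0 + tA - 1 := by
    have h := sum_range_two_diff n (i+1) i
      (fun k => jp (gA k) (gA (k+1))) (fun k => jp (g0 k) (g0 (k+1)))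
      (by omega)
      (fun k hk h1 h2 => by
        show jp (gA k) (gA (k+1)) = jp (g0 k) (g0 (k+1))
        rw [hgA k h1, hgA (k+1) (by omega)])
    rw [if_pos hin, hgA i (by omega), hgAi1, hgA (i+1+1) (by omega),
      jp_self, jp_of_ne hbc] at h
    unfold J1
    rw [h, htAdef]
    ring
  -- Q computation for A
  have hQA : Q1 n (fun k => f k - gA k)
      = Q1 n (fun k => f k - g0 k) + ((f (i+1) - g0 i)^2 - (f (i+1) - g0 (i+1))^2) := by
    have h := sum_range_two_diff (n+1) (n+1) (i+1)
      (fun k => (f k - gA k)^2) (fun k => (f k - g0 k)^2)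
      (by omega)
      (fun k hk h1 h2 => by
        show (f k - gA k)^2 = (f k - g0 k)^2
        rw [hgA k h2])
    rw [if_neg (lt_irrefl (n+1)), if_pos (show i+1 < n+1 by omega), hgAi1] at h
    unfold Q1
    rw [h]
    ring
  -- J computation for B
  have hJB : J1 n gB = J1 n g0 + tB - 1 := by
    set k1B : ℕ := if i = 0 then n else i - 1 with hk1B
    have h := sum_range_two_diff n k1B i
      (fun k => jp (gB k) (gB (k+1))) (fun k => jp (g0 k) (g0 (k+1)))
      (by rcases Nat.eq_zero_or_pos i with h | h
          · rw [hk1B, if_pos h]; omega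
          · rw [hk1B, if_neg (by omega)]; omega)
      (fun k hk h1 h2 => by
        show jp (gB k) (gB (k+1)) = jp (g0 k) (g0 (k+1))
        have hki : k + 1 ≠ i := by
          rcases Nat.eq_zero_or_pos i with h | h
          · omega
          · rw [hk1B, if_neg (by omega)] at h1; omega
        rw [hgB k h2, hgB (k+1) hki])
    rw [if_pos hin, hgBi, hgB (i+1) (by omega), jp_self, jp_of_ne hbc] at h
    have hterm : (if k1B < n then jp (gB k1B) (gB (k1B+1)) - jp (g0 k1B) (g0 (k1B+1)) else 0) = tB := by
      rcases Nat.eq_zero_or_pos i with h' | h'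
      · rw [htBdef, if_neg (show ¬ 1 ≤ i by omega), hk1B, if_pos (show i = 0 by omega),
          if_neg (lt_irrefl n)]
      · rw [htBdef, if_pos (show 1 ≤ i by omega), hk1B, if_neg (show ¬ i = 0 by omega),
          if_pos (show i - 1 < n by omega),
          show i - 1 + 1 = i by omega, hgB (i-1) (by omega), hgBi]
    rw [hterm] at h
    unfold J1
    rw [h]
    ring
  -- Q computation for B
  have hQB : Q1 n (fun k => f k - gB k)
      = Q1 n (fun k => f k - g0 k) + ((f (i+1) - g0 (i+1))^2 - (f (i+1) - g0 i)^2) := by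
    have h := sum_range_two_diff (n+1) (n+1) i
      (fun k => (f k - gB k)^2) (fun k => (f k - g0 k)^2)
      (by omega)
      (fun k hk h1 h2 => by
        show (f k - gB k)^2 = (f k - g0 k)^2
        rw [hgB k h2])
    rw [if_neg (lt_irrefl (n+1)), if_pos (show i < n+1 by omega), hgBi, hf] at h
    unfold Q1
    rw [h]
    ring
  have hA := hmin gA
  have hB := hmin gB
  rw [hJA, hQA] at hA
  rw [hJB, hQB] at hB
  have htAle : tA ≤ 1 := by
    rw [htAdef]; split
    · have h1 := jp_le_one (g0 i) (g0 (i+1+1))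
      have h2 := jp_nonneg (g0 (i+1)) (g0 (i+1+1))
      linarith
    · norm_num
  have htBle : tB ≤ 1 := by
    rw [htBdef]; split
    · have h1 := jp_le_one (g0 (i-1)) (g0 (i+1))
      have h2 := jp_nonneg (g0 (i-1)) (g0 i)
      linarith
    · norm_num
  have htA1 : 1 ≤ tA := by linarith
  have htB1 : 1 ≤ tB := by linarith
  -- consequences of tA = 1 and tB = 1
  have hi1n : i + 1 < n := by
    by_contra h
    rw [htAdef, if_neg h] at htA1
    linarith
  have hAc := jp_sub_ge_one (show 1 ≤ jp (g0 i) (g0 (i+1+1)) - jp (g0 (i+1)) (g0 (i+1+1)) by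
    rw [htAdef, if_pos hi1n] at htA1; exact htA1)
  have hi1 : 1 ≤ i := by
    by_contra h
    rw [htBdef, if_neg h] at htB1
    linarith
  have hD : g0 (i+1) = g0 (i+1+1) := hAc.1
  -- from tB : g0 i = g0 (i-1)
  have hjpB : 1 ≤ jp (g0 (i+1)) (g0 (i-1)) - jp (g0 i) (g0 (i-1)) := by
    rw [htBdef, if_pos hi1] at htB1
    have c1 : jp (g0 (i-1)) (g0 (i+1)) = jp (g0 (i+1)) (g0 (i-1)) := by
      unfold jp; simp [eq_comm]
    have c2 : jp (g0 (i-1)) (g0 i) = jp (g0 i) (g0 (i-1)) := by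
      unfold jp; simp [eq_comm]
    rw [c1, c2] at htB1; exact htB1
  have hE : g0 i = g0 (i-1) := (jp_sub_ge_one hjpB).1
  -- the quadratic terms balance exactly, so gA is also a minimizer
  have heq : (f (i+1) - g0 i)^2 = (f (i+1) - g0 (i+1))^2 := by nlinarith
  have hminA : ∀ g : ℕ → ℝ, J1 n gA + lam * Q1 n (fun k => f k - gA k)
      ≤ J1 n g + lam * Q1 n (fun k => f k - g k) := by
    intro g
    have h1 := hmin g
    rw [hJA, hQA]
    have : tA = 1 := le_antisymm htAle htA1
    rw [this, heq]
    calc J1 n g0 + 1 - 1 + lam * (Q1 n (fun k => f k - g0 k)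
          + ((f (i+1) - g0 (i+1))^2 - (f (i+1) - g0 (i+1))^2))
        = J1 n g0 + lam * Q1 n (fun k => f k - g0 k) := by ring
      _ ≤ _ := h1
  -- the maximal run of g0 ending at i
  have hex : ∃ l0 : ℕ, ∀ k, l0 ≤ k → k ≤ i → g0 k = g0 i :=
    ⟨i, fun k h1 h2 => by rw [le_antisymm h2 h1]⟩
  set l : ℕ := Nat.find hex with hldef
  have hl_spec : ∀ k, l ≤ k → k ≤ i → g0 k = g0 i := Nat.find_spec hex
  have hl_le : l ≤ i := Nat.find_le (fun k h1 h2 => by rw [le_antisymm h2 h1])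
  have habove : l = 0 ∨ g0 (l-1) ≠ g0 i := by
    rcases Nat.eq_zero_or_pos l with h | h
    · exact Or.inl h
    · right
      have hm := Nat.find_min hex (show l - 1 < l by omega)
      push_neg at hm
      obtain ⟨k, hk1, hk2, hk3⟩ := hm
      have : k = l - 1 := by
        by_contra hkk
        exact hk3 (hl_spec k (by omega) hk2)
      rwa [← this]
  -- apply run_mean to g0 on [l, i]
  have S1 := run_mean n lam hlam f g0 hmin l i hl_le hin (g0 i) hl_spec
    (fun h => hbc h.symm) habove
  -- apply run_mean to gA on [l, i+1]
  have hconstA : ∀ k, l ≤ k → k ≤ i+1 → gA k = g0 i := by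
    intro k h1 h2
    rcases Nat.lt_or_ge k (i+1) with h | h
    · rw [hgA k (by omega)]; exact hl_spec k h1 (by omega)
    · have : k = i+1 := by omega
      rw [this, hgAi1]
  have hbelowA : gA (i+1+1) ≠ g0 i := by
    rw [hgA (i+1+1) (by omega), ← hD]
    exact fun h => hbc h.symm
  have haboveA : l = 0 ∨ gA (l-1) ≠ g0 i := by
    rcases habove with h | h
    · exact Or.inl h
    · right; rwa [hgA (l-1) (by omega)]
  have S2 := run_mean n lam hlam f gA hminA l (i+1) (by omega) hi1n (g0 i)
    hconstA hbelowA haboveA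
  -- subtract
  have hsplit := Finset.sum_Icc_succ_top (show l ≤ i+1 by omega) f
  have hcast : ((i+1+1-l : ℕ) : ℝ) = ((i+1-l : ℕ) : ℝ) + 1 := by
    have : (i+1+1-l : ℕ) = (i+1-l) + 1 := by omega
    rw [this]; push_cast; ring
  have hfa : f (i+1) = g0 i := by
    rw [hsplit, S1, hcast] at S2
    linear_combination S2
  rw [hfa] at heq
  have hz : (g0 i - g0 (i+1))^2 = 0 := by linear_combination -heq
  have := pow_eq_zero_iff (n := 2) (by norm_num) |>.mp hz
  exact hbc (by linarith [sub_eq_zero.mp this])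

/-- Number of vertical (row-direction) jumps of an image. -/
noncomputable def rowJumps (n : ℕ) (w : Fin (n + 1) → Fin (n + 1) → ℝ) : ℕ :=
  (Finset.univ.filter fun p : Fin n × Fin (n + 1) =>
    w p.1.castSucc p.2 ≠ w p.1.succ p.2).card

/-- Number of horizontal (column-direction) jumps of an image. -/
noncomputable def colJumps (n : ℕ) (w : Fin (n + 1) → Fin (n + 1) → ℝ) : ℕ :=
  (Finset.univ.filter fun p : Fin (n + 1) × Fin n =>
    w p.1 p.2.castSucc ≠ w p.1 p.2.succ).card

/-- The block-wise Potts prior. -/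
noncomputable def blockPotts (n : ℕ) (u₁ u₂ : Fin (n + 1) → Fin (n + 1) → ℝ) : ℕ :=
  rowJumps n u₁ + colJumps n u₂

/-- Squared Frobenius norm of an image. -/
def sqNorm (n : ℕ) (w : Fin (n + 1) → Fin (n + 1) → ℝ) : ℝ :=
  ∑ i, ∑ j, (w i j) ^ 2

noncomputable def colfun (n : ℕ) (j : Fin (n+1)) (w : Fin (n+1) → Fin (n+1) → ℝ) : ℕ → ℝ :=
  fun k => if h : k < n+1 then w ⟨k, h⟩ j else 0
noncomputable def rowfun (n : ℕ) (i : Fin (n+1)) (w : Fin (n+1) → Fin (n+1) → ℝ) : ℕ → ℝ :=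
  fun k => if h : k < n+1 then w i ⟨k, h⟩ else 0

lemma colfun_lt (n : ℕ) (j : Fin (n+1)) (w : Fin (n+1) → Fin (n+1) → ℝ) (k : ℕ) (h : k < n+1) :
    colfun n j w k = w ⟨k, h⟩ j := dif_pos h
lemma rowfun_lt (n : ℕ) (i : Fin (n+1)) (w : Fin (n+1) → Fin (n+1) → ℝ) (k : ℕ) (h : k < n+1) :
    rowfun n i w k = w i ⟨k, h⟩ := dif_pos h

lemma ite_ne_eq_jp (x y : ℝ) : (if x ≠ y then (1:ℝ) else 0) = jp x y := by
  unfold jp; by_cases h : x = y <;> simp [h]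

lemma castSucc_mk (n : ℕ) (i : Fin n) : (i.castSucc : Fin (n+1)) = ⟨i.val, by omega⟩ := by
  apply Fin.ext; simp
lemma succ_mk (n : ℕ) (i : Fin n) : (i.succ : Fin (n+1)) = ⟨i.val + 1, by omega⟩ := by
  apply Fin.ext; simp

lemma rowJumps_eq (n : ℕ) (w : Fin (n+1) → Fin (n+1) → ℝ) :
    (rowJumps n w : ℝ) = ∑ j : Fin (n+1), J1 n (colfun n j w) := by
  unfold rowJumps
  rw [Finset.card_filter]
  push_cast
  rw [Fintype.sum_prod_type, Finset.sum_comm]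
  apply Finset.sum_congr rfl
  intro j _
  unfold J1
  rw [← Fin.sum_univ_eq_sum_range (fun k => jp (colfun n j w k) (colfun n j w (k+1))) n]
  apply Finset.sum_congr rfl
  intro i _
  rw [colfun_lt n j w i.val i.castSucc.isLt, colfun_lt n j w (i.val+1) (by omega),
    ← castSucc_mk n i, ← succ_mk n i, ite_ne_eq_jp]
lemma colJumps_eq (n : ℕ) (w : Fin (n+1) → Fin (n+1) → ℝ) :
    (colJumps n w : ℝ) = ∑ i : Fin (n+1), J1 n (rowfun n i w) := by
  unfold colJumps
  rw [Finset.card_filter]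
  push_cast
  rw [Fintype.sum_prod_type]
  apply Finset.sum_congr rfl
  intro i _
  unfold J1
  rw [← Fin.sum_univ_eq_sum_range (fun k => jp (rowfun n i w k) (rowfun n i w (k+1))) n]
  apply Finset.sum_congr rfl
  intro j _
  rw [rowfun_lt n i w j.val j.castSucc.isLt, rowfun_lt n i w (j.val+1) (by omega),
    ← castSucc_mk n j, ← succ_mk n j, ite_ne_eq_jp]

lemma sqNorm_eq_col (n : ℕ) (w : Fin (n+1) → Fin (n+1) → ℝ) :
    sqNorm n w = ∑ j : Fin (n+1), Q1 n (colfun n j w) := by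
  unfold sqNorm
  rw [Finset.sum_comm]
  apply Finset.sum_congr rfl
  intro j _
  unfold Q1
  rw [← Fin.sum_univ_eq_sum_range (fun k => (colfun n j w k)^2) (n+1)]
  apply Finset.sum_congr rfl
  intro i _
  rw [colfun_lt n j w i.val i.isLt, Fin.eta]
lemma sqNorm_eq_row (n : ℕ) (w : Fin (n+1) → Fin (n+1) → ℝ) :
    sqNorm n w = ∑ i : Fin (n+1), Q1 n (rowfun n i w) := by
  unfold sqNorm
  apply Finset.sum_congr rfl
  intro i _
  unfold Q1
  rw [← Fin.sum_univ_eq_sum_range (fun k => (rowfun n i w k)^2) (n+1)]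
  apply Finset.sum_congr rfl
  intro j _
  rw [rowfun_lt n i w j.val j.isLt, Fin.eta]

lemma contain_row (n : ℕ) (lam : ℝ) (hlam : 0 < lam)
    (u ub : Fin (n+1) → Fin (n+1) → ℝ)
    (hmin1 : ∀ w : Fin (n+1) → Fin (n+1) → ℝ,
      (rowJumps n ub : ℝ) + lam * sqNorm n (u - ub)
        ≤ (rowJumps n w : ℝ) + lam * sqNorm n (u - w))
    (i : Fin n) (j : Fin (n+1)) (hu : u i.castSucc j = u i.succ j) :
    ub i.castSucc j = ub i.succ j := by
  have key : colfun n j ub i.val = colfun n j ub (i.val + 1) := by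
    apply oneD n lam hlam (colfun n j u) (colfun n j ub) ?_ i.val i.isLt ?_
    · intro g
      set w : Fin (n+1) → Fin (n+1) → ℝ :=
        fun i' j' => if j' = j then g i'.val else ub i' j' with hwdef
      have hw_j : ∀ k, k < n+1 → colfun n j w k = g k := by
        intro k hk
        rw [colfun_lt n j w k hk]
        simp [hwdef]
      have hw_ne : ∀ j' : Fin (n+1), j' ≠ j → colfun n j' w = colfun n j' ub := by
        intro j' hj'
        funext k
        unfold colfun
        split
        · simp only [hwdef]; rw [if_neg hj']
        · rfl
      have hsub : ∀ (a b : Fin (n+1) → Fin (n+1) → ℝ) (j' : Fin (n+1)) (k : ℕ) (hk : k < n+1),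
          colfun n j' (a - b) k = colfun n j' a k - colfun n j' b k := by
        intro a b j' k hk
        rw [colfun_lt n j' _ k hk, colfun_lt n j' a k hk, colfun_lt n j' b k hk]
        rfl
      have h := hmin1 w
      rw [rowJumps_eq, rowJumps_eq, sqNorm_eq_col, sqNorm_eq_col] at h
      have e1 : (∑ j' : Fin (n+1), J1 n (colfun n j' w))
          - (∑ j' : Fin (n+1), J1 n (colfun n j' ub))
          = J1 n g - J1 n (colfun n j ub) := by
        rw [← Finset.sum_sub_distrib]
        rw [Finset.sum_eq_single j]
        · congr 1
          unfold J1
          apply Finset.sum_congr rfl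
          intro k hk
          rw [Finset.mem_range] at hk
          rw [hw_j k (by omega), hw_j (k+1) (by omega)]
        · intro j' _ hj'
          rw [hw_ne j' hj']; ring
        · intro hj; exact absurd (Finset.mem_univ j) hj
      have e2 : (∑ j' : Fin (n+1), Q1 n (colfun n j' (u - w)))
          - (∑ j' : Fin (n+1), Q1 n (colfun n j' (u - ub)))
          = Q1 n (fun k => colfun n j u k - g k)
            - Q1 n (fun k => colfun n j u k - colfun n j ub k) := by
        rw [← Finset.sum_sub_distrib]
        rw [Finset.sum_eq_single j]
        · congr 1
          · unfold Q1
            apply Finset.sum_congr rfl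
            intro k hk
            rw [Finset.mem_range] at hk
            rw [hsub u w j k (by omega), hw_j k (by omega)]
          · unfold Q1
            apply Finset.sum_congr rfl
            intro k hk
            rw [Finset.mem_range] at hk
            rw [hsub u ub j k (by omega)]
        · intro j' _ hj'
          have c1 : colfun n j' (u - w) = colfun n j' (u - ub) := by
            funext k
            unfold colfun
            split
            · have := congrFun (hw_ne j' hj') k
              rw [colfun_lt n j' w k (by assumption), colfun_lt n j' ub k (by assumption)] at this
              show (u - w) _ j' = (u - ub) _ j'
              simp only [Pi.sub_apply]
              rw [this]
            · rfl
          rw [c1]; ring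
        · intro hj; exact absurd (Finset.mem_univ j) hj
      have e2' : lam * (∑ j' : Fin (n+1), Q1 n (colfun n j' (u - w)))
          - lam * (∑ j' : Fin (n+1), Q1 n (colfun n j' (u - ub)))
          = lam * Q1 n (fun k => colfun n j u k - g k)
            - lam * Q1 n (fun k => colfun n j u k - colfun n j ub k) := by
        linear_combination lam * e2
      linarith [h, e1, e2']
    · rw [colfun_lt n j u i.val i.castSucc.isLt, colfun_lt n j u (i.val+1) (by omega),
        ← castSucc_mk n i, ← succ_mk n i]
      exact hu
  rw [colfun_lt n j ub i.val i.castSucc.isLt, colfun_lt n j ub (i.val+1) (by omega),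
    ← castSucc_mk n i, ← succ_mk n i] at key
  exact key

lemma contain_col (n : ℕ) (lam : ℝ) (hlam : 0 < lam)
    (u ub : Fin (n+1) → Fin (n+1) → ℝ)
    (hmin2 : ∀ w : Fin (n+1) → Fin (n+1) → ℝ,
      (colJumps n ub : ℝ) + lam * sqNorm n (u - ub)
        ≤ (colJumps n w : ℝ) + lam * sqNorm n (u - w))
    (i : Fin (n+1)) (j : Fin n) (hu : u i j.castSucc = u i j.succ) :
    ub i j.castSucc = ub i j.succ := by
  have key : rowfun n i ub j.val = rowfun n i ub (j.val + 1) := by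
    apply oneD n lam hlam (rowfun n i u) (rowfun n i ub) ?_ j.val j.isLt ?_
    · intro g
      set w : Fin (n+1) → Fin (n+1) → ℝ :=
        fun i' j' => if i' = i then g j'.val else ub i' j' with hwdef
      have hw_i : ∀ k, k < n+1 → rowfun n i w k = g k := by
        intro k hk
        rw [rowfun_lt n i w k hk]
        simp [hwdef]
      have hw_ne : ∀ i' : Fin (n+1), i' ≠ i → rowfun n i' w = rowfun n i' ub := by
        intro i' hi'
        funext k
        unfold rowfun
        split
        · simp only [hwdef]; rw [if_neg hi']
        · rfl
      have hsub : ∀ (a b : Fin (n+1) → Fin (n+1) → ℝ) (i' : Fin (n+1)) (k : ℕ) (hk : k < n+1),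
          rowfun n i' (a - b) k = rowfun n i' a k - rowfun n i' b k := by
        intro a b i' k hk
        rw [rowfun_lt n i' _ k hk, rowfun_lt n i' a k hk, rowfun_lt n i' b k hk]
        rfl
      have h := hmin2 w
      rw [colJumps_eq, colJumps_eq, sqNorm_eq_row, sqNorm_eq_row] at h
      have e1 : (∑ i' : Fin (n+1), J1 n (rowfun n i' w))
          - (∑ i' : Fin (n+1), J1 n (rowfun n i' ub))
          = J1 n g - J1 n (rowfun n i ub) := by
        rw [← Finset.sum_sub_distrib]
        rw [Finset.sum_eq_single i]
        · congr 1
          unfold J1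
          apply Finset.sum_congr rfl
          intro k hk
          rw [Finset.mem_range] at hk
          rw [hw_i k (by omega), hw_i (k+1) (by omega)]
        · intro i' _ hi'
          rw [hw_ne i' hi']; ring
        · intro hi; exact absurd (Finset.mem_univ i) hi
      have e2 : (∑ i' : Fin (n+1), Q1 n (rowfun n i' (u - w)))
          - (∑ i' : Fin (n+1), Q1 n (rowfun n i' (u - ub)))
          = Q1 n (fun k => rowfun n i u k - g k)
            - Q1 n (fun k => rowfun n i u k - rowfun n i ub k) := by
        rw [← Finset.sum_sub_distrib]
        rw [Finset.sum_eq_single i]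
        · congr 1
          · unfold Q1
            apply Finset.sum_congr rfl
            intro k hk
            rw [Finset.mem_range] at hk
            rw [hsub u w i k (by omega), hw_i k (by omega)]
          · unfold Q1
            apply Finset.sum_congr rfl
            intro k hk
            rw [Finset.mem_range] at hk
            rw [hsub u ub i k (by omega)]
        · intro i' _ hi'
          have c1 : rowfun n i' (u - w) = rowfun n i' (u - ub) := by
            funext k
            unfold rowfun
            split
            · have := congrFun (hw_ne i' hi') k
              rw [rowfun_lt n i' w k (by assumption), rowfun_lt n i' ub k (by assumption)] at this
              show (u - w) i' _ = (u - ub) i' _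
              simp only [Pi.sub_apply]
              rw [this]
            · rfl
          rw [c1]; ring
        · intro hi; exact absurd (Finset.mem_univ i) hi
      have e2' : lam * (∑ i' : Fin (n+1), Q1 n (rowfun n i' (u - w)))
          - lam * (∑ i' : Fin (n+1), Q1 n (rowfun n i' (u - ub)))
          = lam * Q1 n (fun k => rowfun n i u k - g k)
            - lam * Q1 n (fun k => rowfun n i u k - rowfun n i ub k) := by
        linear_combination lam * e2
      linarith [h, e1, e2']
    · rw [rowfun_lt n i u j.val j.castSucc.isLt, rowfun_lt n i u (j.val+1) (by omega),
        ← castSucc_mk n j, ← succ_mk n j]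
      exact hu
  rw [rowfun_lt n i ub j.val j.castSucc.isLt, rowfun_lt n i ub (j.val+1) (by omega),
    ← castSucc_mk n j, ← succ_mk n j] at key
  exact key

lemma sqNorm_nonneg (n : ℕ) (w : Fin (n+1) → Fin (n+1) → ℝ) : 0 ≤ sqNorm n w :=
  Finset.sum_nonneg fun i _ => Finset.sum_nonneg fun j _ => sq_nonneg _

lemma sqNorm_smul (n : ℕ) (c : ℝ) (w : Fin (n+1) → Fin (n+1) → ℝ) :
    sqNorm n (c • w) = c^2 * sqNorm n w := by
  unfold sqNorm
  rw [Finset.mul_sum]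
  apply Finset.sum_congr rfl
  intro i _
  rw [Finset.mul_sum]
  apply Finset.sum_congr rfl
  intro j _
  show (c * w i j)^2 = c^2 * (w i j)^2
  ring

lemma sqNorm_eq_zero (n : ℕ) (w : Fin (n+1) → Fin (n+1) → ℝ) (h : sqNorm n w = 0) :
    w = 0 := by
  funext i j
  have h1 := (Finset.sum_eq_zero_iff_of_nonneg
    (fun i (_ : i ∈ Finset.univ) => Finset.sum_nonneg fun j _ => sq_nonneg (w i j))).mp h
  have h2 := (Finset.sum_eq_zero_iff_of_nonneg
    (fun j (_ : j ∈ Finset.univ) => sq_nonneg (w i j))).mp (h1 i (Finset.mem_univ i))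
  have h3 := h2 j (Finset.mem_univ j)
  have := pow_eq_zero_iff (n := 2) (by norm_num) |>.mp h3
  exact this

theorem blockwise_potts_prox_nonascending (n : ℕ) (β : ℝ) (hβ : 0 < β)
    (u₁ u₂ ub₁ ub₂ : Fin (n + 1) → Fin (n + 1) → ℝ)
    (hmin : ∀ w₁ w₂ : Fin (n + 1) → Fin (n + 1) → ℝ,
      (blockPotts n ub₁ ub₂ : ℝ) +
          1 / (2 * β) * (sqNorm n (u₁ - ub₁) + sqNorm n (u₂ - ub₂)) ≤
        (blockPotts n w₁ w₂ : ℝ) +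
          1 / (2 * β) * (sqNorm n (u₁ - w₁) + sqNorm n (u₂ - w₂))) :
    let δ := Real.sqrt (sqNorm n (ub₁ - u₁) + sqNorm n (ub₂ - u₂))
    let v₁ : Fin (n + 1) → Fin (n + 1) → ℝ :=
      if (ub₁, ub₂) = (u₁, u₂) then 0 else δ⁻¹ • (ub₁ - u₁)
    let v₂ : Fin (n + 1) → Fin (n + 1) → ℝ :=
      if (ub₁, ub₂) = (u₁, u₂) then 0 else δ⁻¹ • (ub₂ - u₂)
    (sqNorm n v₁ + sqNorm n v₂ ≤ 1) ∧
      ∀ t : ℝ, 0 ≤ t →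
        blockPotts n (u₁ + t • v₁) (u₂ + t • v₂) ≤ blockPotts n u₁ u₂ := by
  intro δ v₁ v₂
  have hlam : (0:ℝ) < 1/(2*β) := by positivity
  have hmin1 : ∀ w : Fin (n+1) → Fin (n+1) → ℝ,
      (rowJumps n ub₁ : ℝ) + 1/(2*β) * sqNorm n (u₁ - ub₁)
        ≤ (rowJumps n w : ℝ) + 1/(2*β) * sqNorm n (u₁ - w) := by
    intro w
    have h := hmin w ub₂
    unfold blockPotts at h
    push_cast at h
    linarith
  have hmin2 : ∀ w : Fin (n+1) → Fin (n+1) → ℝ,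
      (colJumps n ub₂ : ℝ) + 1/(2*β) * sqNorm n (u₂ - ub₂)
        ≤ (colJumps n w : ℝ) + 1/(2*β) * sqNorm n (u₂ - w) := by
    intro w
    have h := hmin ub₁ w
    unfold blockPotts at h
    push_cast at h
    linarith
  have hc1 : ∀ (i : Fin n) (j : Fin (n+1)),
      u₁ i.castSucc j = u₁ i.succ j → ub₁ i.castSucc j = ub₁ i.succ j :=
    fun i j h => contain_row n _ hlam u₁ ub₁ hmin1 i j h
  have hc2 : ∀ (i : Fin (n+1)) (j : Fin n),
      u₂ i j.castSucc = u₂ i j.succ → ub₂ i j.castSucc = ub₂ i j.succ :=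
    fun i j h => contain_col n _ hlam u₂ ub₂ hmin2 i j h
  have hv1 : ∀ (i : Fin n) (j : Fin (n+1)),
      u₁ i.castSucc j = u₁ i.succ j → v₁ i.castSucc j = v₁ i.succ j := by
    intro i j h
    by_cases hif : (ub₁, ub₂) = (u₁, u₂)
    · have hv : v₁ = 0 := if_pos hif
      rw [hv]; rfl
    · have hv : v₁ = δ⁻¹ • (ub₁ - u₁) := if_neg hif
      rw [hv]
      show δ⁻¹ * (ub₁ i.castSucc j - u₁ i.castSucc j)
        = δ⁻¹ * (ub₁ i.succ j - u₁ i.succ j)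
      rw [hc1 i j h, h]
  have hv2 : ∀ (i : Fin (n+1)) (j : Fin n),
      u₂ i j.castSucc = u₂ i j.succ → v₂ i j.castSucc = v₂ i j.succ := by
    intro i j h
    by_cases hif : (ub₁, ub₂) = (u₁, u₂)
    · have hv : v₂ = 0 := if_pos hif
      rw [hv]; rfl
    · have hv : v₂ = δ⁻¹ • (ub₂ - u₂) := if_neg hif
      rw [hv]
      show δ⁻¹ * (ub₂ i j.castSucc - u₂ i j.castSucc)
        = δ⁻¹ * (ub₂ i j.succ - u₂ i j.succ)
      rw [hc2 i j h, h]
  constructor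
  · by_cases hif : (ub₁, ub₂) = (u₁, u₂)
    · have h1 : v₁ = 0 := if_pos hif
      have h2 : v₂ = 0 := if_pos hif
      have hz : sqNorm n (0 : Fin (n+1) → Fin (n+1) → ℝ) = 0 := by
        unfold sqNorm; simp
      rw [h1, h2, hz]
      norm_num
    · have h1 : v₁ = δ⁻¹ • (ub₁ - u₁) := if_neg hif
      have h2 : v₂ = δ⁻¹ • (ub₂ - u₂) := if_neg hif
      have hTnn : 0 ≤ sqNorm n (ub₁ - u₁) + sqNorm n (ub₂ - u₂) :=
        add_nonneg (sqNorm_nonneg _ _) (sqNorm_nonneg _ _)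
      have hT0 : 0 < sqNorm n (ub₁ - u₁) + sqNorm n (ub₂ - u₂) := by
        rcases lt_or_eq_of_le hTnn with h | h
        · exact h
        · exfalso
          have e1 : sqNorm n (ub₁ - u₁) = 0 := by
            have := sqNorm_nonneg n (ub₁ - u₁)
            have := sqNorm_nonneg n (ub₂ - u₂)
            linarith
          have e2 : sqNorm n (ub₂ - u₂) = 0 := by
            have := sqNorm_nonneg n (ub₁ - u₁)
            have := sqNorm_nonneg n (ub₂ - u₂)
            linarith
          have z1 : ub₁ = u₁ := sub_eq_zero.mp (sqNorm_eq_zero n _ e1)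
          have z2 : ub₂ = u₂ := sub_eq_zero.mp (sqNorm_eq_zero n _ e2)
          exact hif (by rw [z1, z2])
      have hδ2 : δ^2 = sqNorm n (ub₁ - u₁) + sqNorm n (ub₂ - u₂) :=
        Real.sq_sqrt hTnn
      rw [h1, h2, sqNorm_smul, sqNorm_smul, ← mul_add, inv_pow, hδ2,
        inv_mul_cancel₀ (ne_of_gt hT0)]
  · intro t ht
    unfold blockPotts
    have r1 : rowJumps n (u₁ + t • v₁) ≤ rowJumps n u₁ := by
      unfold rowJumps
      apply Finset.card_le_card
      intro p hp
      rw [Finset.mem_filter] at hp ⊢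
      refine ⟨hp.1, fun heq => hp.2 ?_⟩
      have hvf := hv1 p.1 p.2 heq
      show u₁ p.1.castSucc p.2 + t * v₁ p.1.castSucc p.2
        = u₁ p.1.succ p.2 + t * v₁ p.1.succ p.2
      rw [heq, hvf]
    have r2 : colJumps n (u₂ + t • v₂) ≤ colJumps n u₂ := by
      unfold colJumps
      apply Finset.card_le_card
      intro p hp
      rw [Finset.mem_filter] at hp ⊢
      refine ⟨hp.1, fun heq => hp.2 ?_⟩
      have hvf := hv2 p.1 p.2 heq
      show u₂ p.1 p.2.castSucc + t * v₂ p.1 p.2.castSucc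
        = u₂ p.1 p.2.succ + t * v₂ p.1 p.2.succ
      rw [heq, hvf]
    omega
end
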